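/- Let X be a continuous random vector in ℝ^d with density p and finite differential entropy h(X), and let Y be a discrete random vector in ℝ^d independent of X, taking values y_k with probabilities p_k and finite Shannon entropy H(Y). Then X + Y is absolutely continuous with density q(z) = Σ_k p_k p(z − y_k), and h(X + Y) ≤ h(X) + H(Y). -/

import Mathlib

open Real MeasureTheory ProbabilityTheory
open scoped ENNReal

private lemma aux_ofReal_tsum_le {x : ℕ → ℝ} (hx : Summable x) :
    ENNReal.ofReal (∑' k, x k) ≤ ∑' k, ENNReal.ofReal (x k) := by
  have hu : Summable (fun k => max (x k) 0) :=
    Summable.of_nonneg_of_le (fun k => le_max_right _ _)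
      (fun k => max_le (le_abs_self _) (abs_nonneg _)) hx.abs
  have h2 : ∑' k, x k ≤ ∑' k, max (x k) 0 := Summable.tsum_le_tsum (fun k => le_max_left _ _) hx hu
  calc ENNReal.ofReal (∑' k, x k) ≤ ENNReal.ofReal (∑' k, max (x k) 0) :=
        ENNReal.ofReal_le_ofReal h2
    _ = ∑' k, ENNReal.ofReal (max (x k) 0) :=
        ENNReal.ofReal_tsum_of_nonneg (fun k => le_max_right _ _) hu
    _ = ∑' k, ENNReal.ofReal (x k) := tsum_congr fun k => by
        rcases le_total (x k) 0 with h | h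
        · simp [max_eq_right h, ENNReal.ofReal_of_nonpos h]
        · rw [max_eq_left h]

private lemma aux_summable_of_tsum_ne_top {u : ℕ → ℝ} (hu : ∀ k, 0 ≤ u k)
    (h : ∑' k, ENNReal.ofReal (u k) ≠ ⊤) : Summable u :=
  (ENNReal.summable_toReal h).congr fun k => ENNReal.toReal_ofReal (hu k)

private lemma aux_tangent {a b : ℝ} (ha : 0 ≤ a) (hb : 0 < b) :
    a * Real.log b ≤ a * Real.log a + b - a := by
  rcases ha.eq_or_lt with h | h
  · rw [← h]; simp; linarith
  · have hlog := Real.log_le_sub_one_of_pos (div_pos hb h)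
    rw [Real.log_div hb.ne' h.ne'] at hlog
    have h1 := mul_le_mul_of_nonneg_left hlog h.le
    have hba : a * (b / a) = b := by field_simp
    nlinarith

private lemma aux_mul_log_lb {a : ℝ} (ha : 0 ≤ a) : -(Real.exp 1)⁻¹ ≤ a * Real.log a := by
  rcases ha.eq_or_lt with h | h
  · rw [← h]; simp; positivity
  · have hx : 0 < (a * Real.exp 1)⁻¹ := by positivity
    have hlog := Real.log_le_sub_one_of_pos hx
    rw [Real.log_inv, Real.log_mul h.ne' (Real.exp_pos 1).ne', Real.log_exp] at hlog
    have h1 := mul_le_mul_of_nonneg_left hlog h.le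
    have h2 : a * (a * Real.exp 1)⁻¹ = (Real.exp 1)⁻¹ := by field_simp
    nlinarith

theorem entropy_of_sum_with_discrete (d : ℕ) (hd : 1 ≤ d)
    (Ω : Type*) [MeasurableSpace Ω] (μ : Measure Ω) [IsProbabilityMeasure μ]
    (X Y : Ω → EuclideanSpace ℝ (Fin d))
    (hX_meas : Measurable X) (hY_meas : Measurable Y)
    (hindep : IndepFun X Y μ)
    (p : EuclideanSpace ℝ (Fin d) → ℝ)
    (hp_meas : Measurable p) (hp_nonneg : ∀ x, 0 ≤ p x)
    (hX_density : Measure.map X μ = volume.withDensity (fun x => ENNReal.ofReal (p x)))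
    (y : ℕ → EuclideanSpace ℝ (Fin d)) (w : ℕ → ℝ)
    (hw_nonneg : ∀ k, 0 ≤ w k) (hw_sum : ∑' k, w k = 1)
    (hY_law : Measure.map Y μ
      = Measure.sum (fun k => ENNReal.ofReal (w k) • Measure.dirac (y k)))
    (q : EuclideanSpace ℝ (Fin d) → ℝ)
    (hq : q = fun z => ∑' k, w k * p (z - y k))
    (hhX : Integrable (fun x => p x * Real.log (p x)))
    (hHY : Summable (fun k => w k * Real.log (w k))) :
    Measure.map (fun ω => X ω + Y ω) μ
        = volume.withDensity (fun z => ENNReal.ofReal (q z)) ∧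
    -∫ z, q z * Real.log (q z)
        ≤ (-∫ x, p x * Real.log (p x)) + (-∑' k, w k * Real.log (w k)) := by
  set Q : EuclideanSpace ℝ (Fin d) → ℝ≥0∞ := fun z => ∑' k, ENNReal.ofReal (w k) * ENNReal.ofReal (p (z - y k))
    with hQ_def
  -- basic facts
  have hw_summable : Summable w := by
    by_contra h
    rw [tsum_eq_zero_of_not_summable h] at hw_sum
    norm_num at hw_sum
  have hw_le_one : ∀ k, w k ≤ 1 := by
    intro k
    rw [← hw_sum]
    exact Summable.le_tsum hw_summable k fun j _ => hw_nonneg j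
  have hak_meas : ∀ k, Measurable fun z : EuclideanSpace ℝ (Fin d) => p (z - y k) :=
    fun k => hp_meas.comp (measurable_sub_const (y k))
  have hak_meas' : ∀ k, Measurable fun z : EuclideanSpace ℝ (Fin d) =>
      ENNReal.ofReal (p (z - y k)) :=
    fun k => ENNReal.measurable_ofReal.comp (hak_meas k)
  have hfk_meas : ∀ k, Measurable fun z : EuclideanSpace ℝ (Fin d) =>
      ENNReal.ofReal (w k) * ENNReal.ofReal (p (z - y k)) :=
    fun k => (hak_meas' k).const_mul _
  have hQ_meas : Measurable Q := Measurable.ennreal_tsum hfk_meas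
  have hsumc : ∑' k, ENNReal.ofReal (w k) = 1 := by
    rw [← ENNReal.ofReal_tsum_of_nonneg hw_nonneg hw_summable, hw_sum, ENNReal.ofReal_one]
  have hp_lint : ∫⁻ x, ENNReal.ofReal (p x) = 1 := by
    have h0 := congrArg (fun m : Measure (EuclideanSpace ℝ (Fin d)) => m Set.univ) hX_density
    have : IsProbabilityMeasure (Measure.map X μ) :=
      Measure.isProbabilityMeasure_map hX_meas.aemeasurable
    simpa [withDensity_apply _ MeasurableSet.univ, setLIntegral_univ] using h0.symm
  have hak_lint : ∀ k, ∫⁻ z, ENNReal.ofReal (p (z - y k)) = 1 := fun k => by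
    rw [lintegral_sub_right_eq_self (fun z => ENNReal.ofReal (p z)) (y k), hp_lint]
  have hQ_lint : ∫⁻ z, Q z = 1 := by
    simp only [hQ_def]
    rw [lintegral_tsum fun k => (hfk_meas k).aemeasurable]
    calc ∑' k, ∫⁻ z, ENNReal.ofReal (w k) * ENNReal.ofReal (p (z - y k))
        = ∑' k, ENNReal.ofReal (w k) * ∫⁻ z, ENNReal.ofReal (p (z - y k)) :=
          tsum_congr fun k => lintegral_const_mul _ (hak_meas' k)
      _ = ∑' k, ENNReal.ofReal (w k) := by simp [hak_lint]
      _ = 1 := hsumc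
  have hQ_lt_top : ∀ᵐ z, Q z < ⊤ := ae_lt_top hQ_meas (by rw [hQ_lint]; exact ENNReal.one_ne_top)
  have hQ_ofReal : ∀ z, Q z = ∑' k, ENNReal.ofReal (w k * p (z - y k)) := fun z =>
    tsum_congr fun k => (ENNReal.ofReal_mul (hw_nonneg k)).symm
  have hsummable : ∀ᵐ z, Summable fun k => w k * p (z - y k) := by
    filter_upwards [hQ_lt_top] with z hz
    apply aux_summable_of_tsum_ne_top (fun k => mul_nonneg (hw_nonneg k) (hp_nonneg _))
    rw [← hQ_ofReal]
    exact hz.ne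
  have hQeq : ∀ z, Summable (fun k => w k * p (z - y k)) → Q z = ENNReal.ofReal (q z) := by
    intro z hz
    rw [hq, hQ_ofReal,
      ENNReal.ofReal_tsum_of_nonneg (fun k => mul_nonneg (hw_nonneg k) (hp_nonneg _)) hz]
  -- Part 1
  have hjoint := (indepFun_iff_map_prod_eq_prod_map_map hX_meas.aemeasurable
    hY_meas.aemeasurable).mp hindep
  have hmap1 : Measure.map (fun ω => X ω + Y ω) μ
      = Measure.map (fun r : EuclideanSpace ℝ (Fin d) × EuclideanSpace ℝ (Fin d) => r.1 + r.2) ((Measure.map X μ).prod (Measure.map Y μ)) := by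
    rw [← hjoint, Measure.map_map measurable_add (hX_meas.prodMk hY_meas)]
    rfl
  have hpart1 : Measure.map (fun ω => X ω + Y ω) μ = volume.withDensity Q := by
    rw [hmap1, hX_density, hY_law]
    ext s hs
    have hsm : ∀ x : EuclideanSpace ℝ (Fin d), MeasurableSet {v : EuclideanSpace ℝ (Fin d) | x + v ∈ s} := fun x => (measurable_const_add x) hs
    have hsm2 : ∀ k, MeasurableSet {z : EuclideanSpace ℝ (Fin d) | z + y k ∈ s} := fun k => (measurable_add_const (y k)) hs
    have hind : ∀ (k) (x : EuclideanSpace ℝ (Fin d)),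
        ({v : EuclideanSpace ℝ (Fin d) | x + v ∈ s}).indicator (1 : EuclideanSpace ℝ (Fin d) → ℝ≥0∞) (y k)
          = ({z : EuclideanSpace ℝ (Fin d) | z + y k ∈ s}).indicator (1 : EuclideanSpace ℝ (Fin d) → ℝ≥0∞) x := by
      intro k x
      by_cases h : x + y k ∈ s <;> simp [Set.indicator_apply, Set.mem_setOf_eq, h]
    have htrans : ∀ k, (volume.withDensity fun x => ENNReal.ofReal (p x)) {z : EuclideanSpace ℝ (Fin d) | z + y k ∈ s}
        = ∫⁻ z in s, ENNReal.ofReal (p (z - y k)) := by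
      intro k
      rw [withDensity_apply _ (hsm2 k), ← lintegral_indicator (hsm2 k), ← lintegral_indicator hs]
      calc ∫⁻ x, ({z : EuclideanSpace ℝ (Fin d) | z + y k ∈ s}).indicator (fun z => ENNReal.ofReal (p z)) x
          = ∫⁻ x, (s.indicator (fun z => ENNReal.ofReal (p (z - y k)))) (x + y k) :=
            lintegral_congr fun x => by
              by_cases h : x + y k ∈ s <;>
                simp [Set.indicator_apply, Set.mem_setOf_eq, h, add_sub_cancel_right]
        _ = ∫⁻ x, (s.indicator (fun z => ENNReal.ofReal (p (z - y k)))) x :=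
            lintegral_add_right_eq_self _ (y k)
    calc (Measure.map (fun r : EuclideanSpace ℝ (Fin d) × EuclideanSpace ℝ (Fin d) => r.1 + r.2)
          ((volume.withDensity fun x => ENNReal.ofReal (p x)).prod
            (Measure.sum fun k => ENNReal.ofReal (w k) • Measure.dirac (y k)))) s
        = ((volume.withDensity fun x => ENNReal.ofReal (p x)).prod
            (Measure.sum fun k => ENNReal.ofReal (w k) • Measure.dirac (y k)))
            ((fun r : EuclideanSpace ℝ (Fin d) × EuclideanSpace ℝ (Fin d) => r.1 + r.2) ⁻¹' s) := Measure.map_apply measurable_add hs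
      _ = ∫⁻ x, (Measure.sum fun k => ENNReal.ofReal (w k) • Measure.dirac (y k))
            {v : EuclideanSpace ℝ (Fin d) | x + v ∈ s} ∂(volume.withDensity fun x => ENNReal.ofReal (p x)) :=
          Measure.prod_apply (measurable_add hs)
      _ = ∫⁻ x, ∑' k, ENNReal.ofReal (w k) * ({z : EuclideanSpace ℝ (Fin d) | z + y k ∈ s}).indicator 1 x
            ∂(volume.withDensity fun x => ENNReal.ofReal (p x)) := by
          refine lintegral_congr fun x => ?_
          rw [Measure.sum_apply _ (hsm x)]
          refine tsum_congr fun k => ?_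
          rw [Measure.smul_apply, Measure.dirac_apply' _ (hsm x), smul_eq_mul, hind k x]
      _ = ∑' k, ENNReal.ofReal (w k) * ∫⁻ x, ({z : EuclideanSpace ℝ (Fin d) | z + y k ∈ s}).indicator 1 x
            ∂(volume.withDensity fun x => ENNReal.ofReal (p x)) := by
          rw [lintegral_tsum fun k => (((measurable_one.indicator (hsm2 k))).const_mul
            (ENNReal.ofReal (w k))).aemeasurable]
          exact tsum_congr fun k =>
            lintegral_const_mul _ (measurable_one.indicator (hsm2 k))
      _ = ∑' k, ENNReal.ofReal (w k) * ∫⁻ z in s, ENNReal.ofReal (p (z - y k)) := by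
          refine tsum_congr fun k => ?_
          rw [lintegral_indicator_one (hsm2 k), htrans k]
      _ = ∫⁻ z in s, ∑' k, ENNReal.ofReal (w k) * ENNReal.ofReal (p (z - y k)) := by
          rw [lintegral_tsum fun k => (hfk_meas k).aemeasurable]
          exact tsum_congr fun k => (lintegral_const_mul _ (hak_meas' k)).symm
      _ = (volume.withDensity Q) s := (withDensity_apply Q hs).symm
  have hpart1' : Measure.map (fun ω => X ω + Y ω) μ
      = volume.withDensity (fun z => ENNReal.ofReal (q z)) :=
    hpart1.trans (withDensity_congr_ae (by filter_upwards [hsummable] with z hz using hQeq z hz))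
  refine ⟨hpart1', ?_⟩
  -- ===================== Part 2 =====================
  -- q expressed via Q
  have hq_toReal : ∀ z, q z = (Q z).toReal := by
    intro z
    by_cases hz : Summable fun k => w k * p (z - y k)
    · rw [hQeq z hz]
      rw [ENNReal.toReal_ofReal]
      rw [hq]
      exact tsum_nonneg fun k => mul_nonneg (hw_nonneg k) (hp_nonneg _)
    · rw [hq]
      simp only [tsum_eq_zero_of_not_summable hz]
      by_cases htop : Q z = ⊤
      · simp [htop]
      · exact absurd (aux_summable_of_tsum_ne_top
          (fun k => mul_nonneg (hw_nonneg k) (hp_nonneg _)) (by rw [← hQ_ofReal]; exact htop)) hz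
  have hq_nonneg : ∀ z, 0 ≤ q z := fun z => (hq_toReal z) ▸ ENNReal.toReal_nonneg
  have hq_meas : Measurable q := by
    have : q = fun z => (Q z).toReal := funext hq_toReal
    rw [this]; exact hQ_meas.ennreal_toReal
  have hfk_le_q : ∀ᵐ z, ∀ k, w k * p (z - y k) ≤ q z := by
    filter_upwards [hsummable] with z hz
    intro k
    rw [hq]
    exact Summable.le_tsum hz k fun j _ => mul_nonneg (hw_nonneg j) (hp_nonneg _)
  -- p integrable with integral 1
  have hp_int : Integrable p :=
    ⟨hp_meas.aestronglyMeasurable,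
      (hasFiniteIntegral_iff_ofReal (ae_of_all _ hp_nonneg)).mpr
        (by rw [hp_lint]; exact ENNReal.one_lt_top)⟩
  have hp_int1 : ∫ x, p x = 1 := by
    rw [integral_eq_lintegral_of_nonneg_ae (ae_of_all _ hp_nonneg) hp_meas.aestronglyMeasurable,
      hp_lint]
    simp
  -- measurability of entropy integrands
  have hplogp_meas : Measurable fun x => p x * Real.log (p x) :=
    hp_meas.mul (Real.measurable_log.comp hp_meas)
  have hplogq_meas : Measurable fun z => q z * Real.log (q z) :=
    hq_meas.mul (Real.measurable_log.comp hq_meas)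
  have hfkr_meas : ∀ k, Measurable fun z : EuclideanSpace ℝ (Fin d) => w k * p (z - y k) :=
    fun k => (hak_meas k).const_mul _
  have hplogak_meas : ∀ k, Measurable fun z : EuclideanSpace ℝ (Fin d) =>
      p (z - y k) * Real.log (p (z - y k)) :=
    fun k => (hak_meas k).mul (Real.measurable_log.comp (hak_meas k))
  have hplogfk_meas : ∀ k, Measurable fun z : EuclideanSpace ℝ (Fin d) =>
      w k * p (z - y k) * Real.log (w k * p (z - y k)) :=
    fun k => (hfkr_meas k).mul (Real.measurable_log.comp (hfkr_meas k))
  -- finite positive and negative lintegrals of p log p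
  have hBp_top : ∫⁻ x, ENNReal.ofReal (p x * Real.log (p x)) ≠ ⊤ := by
    refine ne_top_of_le_ne_top hhX.2.ne (lintegral_mono fun x => ?_)
    rw [Real.enorm_eq_ofReal_abs]
    exact ENNReal.ofReal_le_ofReal (le_abs_self _)
  have hBm_top : ∫⁻ x, ENNReal.ofReal (-(p x * Real.log (p x))) ≠ ⊤ := by
    refine ne_top_of_le_ne_top hhX.2.ne (lintegral_mono fun x => ?_)
    rw [Real.enorm_eq_ofReal_abs]
    exact ENNReal.ofReal_le_ofReal (neg_le_abs _)
  have hwlog_nonpos : ∀ k, w k * Real.log (w k) ≤ 0 :=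
    fun k => mul_nonpos_of_nonneg_of_nonpos (hw_nonneg k)
      (Real.log_nonpos (hw_nonneg k) (hw_le_one k))
  have hC_top : ∑' k, ENNReal.ofReal (-(w k * Real.log (w k))) ≠ ⊤ := by
    rw [← ENNReal.ofReal_tsum_of_nonneg (fun k => neg_nonneg.mpr (hwlog_nonpos k)) hHY.neg]
    exact ENNReal.ofReal_ne_top
  -- pointwise bound for the positive part
  have hptwise_p : ∀ z, Summable (fun k => w k * p (z - y k)) →
      ENNReal.ofReal (q z * Real.log (q z))
        ≤ ∑' k, ENNReal.ofReal (w k * (p (z - y k) * Real.log (p (z - y k)))) := by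
    intro z hz
    have hs_eq : q z = ∑' k, w k * p (z - y k) := by rw [hq]
    rcases (hq_nonneg z).eq_or_lt with hs0 | hs_pos
    · rw [← hs0]; simp
    · set r : ℕ → ℝ := fun k => w k * (p (z - y k) * Real.log (p (z - y k))) with hr
      by_cases hrsum : Summable fun k => max (r k) 0
      case neg =>
        have heq : ∀ k, ENNReal.ofReal (max (r k) 0) = ENNReal.ofReal (r k) := by
          intro k
          rcases le_total (r k) 0 with h | h
          · simp [max_eq_right h, ENNReal.ofReal_of_nonpos h]
          · rw [max_eq_left h]
        have htop : ∑' k, ENNReal.ofReal (r k) = ⊤ := by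
          by_contra htop
          exact hrsum (aux_summable_of_tsum_ne_top (fun k => le_max_right _ _)
            (by rw [tsum_congr heq]; exact htop))
        exact htop ▸ le_top
      case pos =>
        have hminlb : ∀ k, -(w k * (Real.exp 1)⁻¹) ≤ min (r k) 0 := by
          intro k
          refine le_min ?_ (neg_nonpos.mpr (mul_nonneg (hw_nonneg k) (by positivity)))
          have h1 := aux_mul_log_lb (hp_nonneg (z - y k))
          have h2 := mul_le_mul_of_nonneg_left h1 (hw_nonneg k)
          simp only [hr]
          nlinarith
        have hmin_sum : Summable fun k => min (r k) 0 := by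
          have h1 : Summable fun k => -(min (r k) 0) :=
            Summable.of_nonneg_of_le (fun k => neg_nonneg.mpr (min_le_right _ _))
              (fun k => by linarith [hminlb k]) (hw_summable.mul_right ((Real.exp 1)⁻¹))
          simpa using h1.neg
        have hrsum' : Summable r := by
          have hre : r = fun k => max (r k) 0 + min (r k) 0 := by
            funext k
            rw [max_add_min, add_zero]
          rw [hre]; exact hrsum.add hmin_sum
        have hkey : q z * Real.log (q z) ≤ ∑' k, r k := by
          have h1 : q z * Real.log (q z) = ∑' k, w k * p (z - y k) * Real.log (q z) := by
            rw [tsum_mul_right, ← hs_eq]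
          rw [h1]
          have h2 : ∀ k, w k * p (z - y k) * Real.log (q z)
              ≤ r k + w k * q z - w k * p (z - y k) := by
            intro k
            have h3 := aux_tangent (hp_nonneg (z - y k)) hs_pos
            have h4 := mul_le_mul_of_nonneg_left h3 (hw_nonneg k)
            simp only [hr]
            nlinarith
          calc ∑' k, w k * p (z - y k) * Real.log (q z)
              ≤ ∑' k, (r k + w k * q z - w k * p (z - y k)) :=
                Summable.tsum_le_tsum h2 (hz.mul_right _)
                  ((hrsum'.add (hw_summable.mul_right _)).sub hz)
            _ = ((∑' k, r k) + ∑' k, w k * q z) - ∑' k, w k * p (z - y k) := by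
                rw [Summable.tsum_sub (hrsum'.add (hw_summable.mul_right _)) hz,
                  Summable.tsum_add hrsum' (hw_summable.mul_right _)]
            _ = ∑' k, r k := by
                rw [tsum_mul_right, hw_sum, one_mul, ← hs_eq]; ring
        calc ENNReal.ofReal (q z * Real.log (q z))
            ≤ ENNReal.ofReal (∑' k, r k) := ENNReal.ofReal_le_ofReal hkey
          _ ≤ ∑' k, ENNReal.ofReal (r k) := aux_ofReal_tsum_le hrsum'
  -- positive part of q log q has finite integral, bounded by that of p log p
  have hAp_le : ∫⁻ z, ENNReal.ofReal (q z * Real.log (q z))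
      ≤ ∫⁻ x, ENNReal.ofReal (p x * Real.log (p x)) := by
    have h1 : ∫⁻ z, ENNReal.ofReal (q z * Real.log (q z))
        ≤ ∫⁻ z, ∑' k, ENNReal.ofReal (w k * (p (z - y k) * Real.log (p (z - y k)))) :=
      lintegral_mono_ae (by filter_upwards [hsummable] with z hz using hptwise_p z hz)
    refine h1.trans ?_
    have hmk : ∀ k, Measurable fun z : EuclideanSpace ℝ (Fin d) =>
        ENNReal.ofReal (w k * (p (z - y k) * Real.log (p (z - y k)))) :=
      fun k => ((hplogak_meas k).const_mul (w k)).ennreal_ofReal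
    rw [lintegral_tsum fun k => (hmk k).aemeasurable]
    calc ∑' k, ∫⁻ z, ENNReal.ofReal (w k * (p (z - y k) * Real.log (p (z - y k))))
        = ∑' k, ENNReal.ofReal (w k)
            * ∫⁻ z, ENNReal.ofReal (p (z - y k) * Real.log (p (z - y k))) := by
          refine tsum_congr fun k => ?_
          rw [← lintegral_const_mul _ ((hplogak_meas k).ennreal_ofReal)]
          exact lintegral_congr fun z => ENNReal.ofReal_mul (hw_nonneg k)
      _ = ∑' k, ENNReal.ofReal (w k) * ∫⁻ x, ENNReal.ofReal (p x * Real.log (p x)) := by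
          refine tsum_congr fun k => ?_
          rw [lintegral_sub_right_eq_self
            (fun x => ENNReal.ofReal (p x * Real.log (p x))) (y k)]
      _ = ∫⁻ x, ENNReal.ofReal (p x * Real.log (p x)) := by
          rw [ENNReal.tsum_mul_right, hsumc, one_mul]
      _ ≤ ∫⁻ x, ENNReal.ofReal (p x * Real.log (p x)) := le_rfl
  have hAp_top : ∫⁻ z, ENNReal.ofReal (q z * Real.log (q z)) ≠ ⊤ :=
    ne_top_of_le_ne_top hBp_top hAp_le
  -- pointwise bound for the negative part
  have hptwise_m : ∀ z, Summable (fun k => w k * p (z - y k)) →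
      ENNReal.ofReal (-(q z * Real.log (q z)))
        ≤ ∑' k, ENNReal.ofReal (-(w k * p (z - y k) * Real.log (w k * p (z - y k)))) := by
    intro z hz
    have hs_eq : q z = ∑' k, w k * p (z - y k) := by rw [hq]
    rcases (hq_nonneg z).eq_or_lt with hs0 | hs_pos
    · rw [← hs0]; simp
    · have hfq : ∀ k, w k * p (z - y k) ≤ q z := by
        intro k; rw [hs_eq]
        exact Summable.le_tsum hz k fun j _ => mul_nonneg (hw_nonneg j) (hp_nonneg _)
      have h1 : -(q z * Real.log (q z)) = ∑' k, w k * p (z - y k) * (-Real.log (q z)) := by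
        rw [tsum_mul_right, ← hs_eq]; ring
      rw [h1]
      refine (aux_ofReal_tsum_le (hz.mul_right _)).trans ?_
      refine ENNReal.tsum_le_tsum fun k => ENNReal.ofReal_le_ofReal ?_
      rcases (mul_nonneg (hw_nonneg k) (hp_nonneg (z - y k))).eq_or_lt with hf0 | hf_pos
      · rw [← hf0]; simp
      · have h2 := Real.log_le_log hf_pos (hfq k)
        nlinarith
  -- negative part: per-k lintegral bound
  have hperk_m : ∀ k, ∫⁻ z, ENNReal.ofReal (-(w k * p (z - y k) * Real.log (w k * p (z - y k))))
      ≤ ENNReal.ofReal (-(w k * Real.log (w k)))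
        + ENNReal.ofReal (w k) * ∫⁻ x, ENNReal.ofReal (-(p x * Real.log (p x))) := by
    intro k
    rcases (hw_nonneg k).eq_or_lt with hw0 | hw_pos
    · simp [← hw0]
    · have hptw : ∀ z : EuclideanSpace ℝ (Fin d),
          -(w k * p (z - y k) * Real.log (w k * p (z - y k)))
            = w k * (p (z - y k) * (-Real.log (w k)))
              + w k * (-(p (z - y k) * Real.log (p (z - y k)))) := by
        intro z
        rcases (hp_nonneg (z - y k)).eq_or_lt with hp0 | hp_pos
        · rw [← hp0]; simp
        · rw [Real.log_mul hw_pos.ne' hp_pos.ne']; ring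
      have hm1 : Measurable fun z : EuclideanSpace ℝ (Fin d) =>
          w k * (p (z - y k) * (-Real.log (w k))) :=
        (((hak_meas k).mul_const _).const_mul _)
      calc ∫⁻ z, ENNReal.ofReal (-(w k * p (z - y k) * Real.log (w k * p (z - y k))))
          = ∫⁻ z, ENNReal.ofReal (w k * (p (z - y k) * (-Real.log (w k)))
              + w k * (-(p (z - y k) * Real.log (p (z - y k))))) :=
            lintegral_congr fun z => by rw [hptw z]
        _ ≤ ∫⁻ z, (ENNReal.ofReal (w k * (p (z - y k) * (-Real.log (w k))))
              + ENNReal.ofReal (w k * (-(p (z - y k) * Real.log (p (z - y k)))))) :=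
            lintegral_mono fun z => ENNReal.ofReal_add_le
        _ = (∫⁻ z, ENNReal.ofReal (w k * (p (z - y k) * (-Real.log (w k)))))
              + ∫⁻ z, ENNReal.ofReal (w k * (-(p (z - y k) * Real.log (p (z - y k))))) :=
            lintegral_add_left hm1.ennreal_ofReal _
        _ = ENNReal.ofReal (-(w k * Real.log (w k)))
              + ENNReal.ofReal (w k) * ∫⁻ x, ENNReal.ofReal (-(p x * Real.log (p x))) := by
            congr 1
            · have hc : 0 ≤ -Real.log (w k) :=
                neg_nonneg.mpr (Real.log_nonpos (hw_nonneg k) (hw_le_one k))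
              calc ∫⁻ z, ENNReal.ofReal (w k * (p (z - y k) * (-Real.log (w k))))
                  = ∫⁻ z, ENNReal.ofReal (w k * (-Real.log (w k)))
                      * ENNReal.ofReal (p (z - y k)) :=
                    lintegral_congr fun z => by
                      rw [← ENNReal.ofReal_mul (mul_nonneg (hw_nonneg k) hc)]
                      congr 1; ring
                _ = ENNReal.ofReal (w k * (-Real.log (w k)))
                      * ∫⁻ z, ENNReal.ofReal (p (z - y k)) :=
                    lintegral_const_mul _ (hak_meas' k)
                _ = ENNReal.ofReal (-(w k * Real.log (w k))) := by
                    rw [hak_lint k, mul_one]; congr 1; ring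
            · calc ∫⁻ z, ENNReal.ofReal (w k * (-(p (z - y k) * Real.log (p (z - y k)))))
                  = ENNReal.ofReal (w k)
                      * ∫⁻ z, ENNReal.ofReal (-(p (z - y k) * Real.log (p (z - y k)))) := by
                    rw [← lintegral_const_mul _ (f := fun z => ENNReal.ofReal (-(p (z - y k) * Real.log (p (z - y k))))) ((hplogak_meas k).neg.ennreal_ofReal)]
                    exact lintegral_congr fun z => ENNReal.ofReal_mul (hw_nonneg k)
                _ = ENNReal.ofReal (w k) * ∫⁻ x, ENNReal.ofReal (-(p x * Real.log (p x))) := by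
                    rw [lintegral_sub_right_eq_self
                      (fun x => ENNReal.ofReal (-(p x * Real.log (p x)))) (y k)]
  have hAm_le : ∫⁻ z, ENNReal.ofReal (-(q z * Real.log (q z)))
      ≤ (∑' k, ENNReal.ofReal (-(w k * Real.log (w k))))
        + ∫⁻ x, ENNReal.ofReal (-(p x * Real.log (p x))) := by
    have h1 : ∫⁻ z, ENNReal.ofReal (-(q z * Real.log (q z)))
        ≤ ∫⁻ z, ∑' k, ENNReal.ofReal (-(w k * p (z - y k) * Real.log (w k * p (z - y k)))) :=
      lintegral_mono_ae (by filter_upwards [hsummable] with z hz using hptwise_m z hz)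
    refine h1.trans ?_
    rw [lintegral_tsum (f := fun k z => ENNReal.ofReal (-(w k * p (z - y k) * Real.log (w k * p (z - y k))))) fun k => ((hplogfk_meas k).neg.ennreal_ofReal).aemeasurable]
    refine (ENNReal.tsum_le_tsum hperk_m).trans ?_
    rw [ENNReal.tsum_add, ENNReal.tsum_mul_right, hsumc, one_mul]
  have hAm_top : ∫⁻ z, ENNReal.ofReal (-(q z * Real.log (q z))) ≠ ⊤ :=
    ne_top_of_le_ne_top (ENNReal.add_ne_top.mpr ⟨hC_top, hBm_top⟩) hAm_le
  -- integrability of q log q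
  have hint_q : Integrable fun z => q z * Real.log (q z) := by
    refine ⟨hplogq_meas.aestronglyMeasurable, ?_⟩
    have habs_q : ∫⁻ z, (‖q z * Real.log (q z)‖₊ : ℝ≥0∞)
        = (∫⁻ z, ENNReal.ofReal (q z * Real.log (q z)))
          + ∫⁻ z, ENNReal.ofReal (-(q z * Real.log (q z))) := by
      rw [← lintegral_add_left hplogq_meas.ennreal_ofReal]
      refine lintegral_congr fun z => ?_
      rw [← enorm_eq_nnnorm, Real.enorm_eq_ofReal_abs]
      rcases le_total 0 (q z * Real.log (q z)) with h | h
      · rw [abs_of_nonneg h, ENNReal.ofReal_of_nonpos (neg_nonpos.mpr h), add_zero]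
      · rw [abs_of_nonpos h, ENNReal.ofReal_of_nonpos h, zero_add]
    show ∫⁻ z, (‖q z * Real.log (q z)‖₊ : ℝ≥0∞) < ⊤
    rw [habs_q]
    exact ENNReal.add_lt_top.mpr ⟨hAp_top.lt_top, hAm_top.lt_top⟩
  have hint_eq : ∫ z, q z * Real.log (q z)
      = (∫⁻ z, ENNReal.ofReal (q z * Real.log (q z))).toReal
        - (∫⁻ z, ENNReal.ofReal (-(q z * Real.log (q z)))).toReal :=
    integral_eq_lintegral_pos_part_sub_lintegral_neg_part hint_q
  -- the decomposition of ∫ f_k log q into positive and negative parts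
  have he_meas : ∀ k, Measurable fun z : EuclideanSpace ℝ (Fin d) =>
      ENNReal.ofReal (w k * p (z - y k)) * ENNReal.ofReal (Real.log (q z)) :=
    fun k => (hfkr_meas k).ennreal_ofReal.mul (Real.measurable_log.comp hq_meas).ennreal_ofReal
  have hg_meas : ∀ k, Measurable fun z : EuclideanSpace ℝ (Fin d) =>
      ENNReal.ofReal (w k * p (z - y k)) * ENNReal.ofReal (-Real.log (q z)) :=
    fun k => (hfkr_meas k).ennreal_ofReal.mul
      (Real.measurable_log.comp hq_meas).neg.ennreal_ofReal
  have hesum : ∑' k, ∫⁻ z, ENNReal.ofReal (w k * p (z - y k)) * ENNReal.ofReal (Real.log (q z))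
      = ∫⁻ z, ENNReal.ofReal (q z * Real.log (q z)) := by
    rw [← lintegral_tsum fun k => (he_meas k).aemeasurable]
    refine lintegral_congr_ae ?_
    filter_upwards [hsummable] with z hz
    rw [ENNReal.tsum_mul_right, ← hQ_ofReal, hQeq z hz, ← ENNReal.ofReal_mul (hq_nonneg z)]
  have hgsum : ∑' k, ∫⁻ z, ENNReal.ofReal (w k * p (z - y k)) * ENNReal.ofReal (-Real.log (q z))
      = ∫⁻ z, ENNReal.ofReal (-(q z * Real.log (q z))) := by
    rw [← lintegral_tsum fun k => (hg_meas k).aemeasurable]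
    refine lintegral_congr_ae ?_
    filter_upwards [hsummable] with z hz
    rw [ENNReal.tsum_mul_right, ← hQ_ofReal, hQeq z hz, ← ENNReal.ofReal_mul (hq_nonneg z)]
    congr 1; ring
  have he_top : ∀ k,
      (∫⁻ z, ENNReal.ofReal (w k * p (z - y k)) * ENNReal.ofReal (Real.log (q z))) ≠ ⊤ :=
    fun k => ne_top_of_le_ne_top (hesum ▸ hAp_top) (ENNReal.le_tsum k)
  have hg_top : ∀ k,
      (∫⁻ z, ENNReal.ofReal (w k * p (z - y k)) * ENNReal.ofReal (-Real.log (q z))) ≠ ⊤ :=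
    fun k => ne_top_of_le_ne_top (hgsum ▸ hAm_top) (ENNReal.le_tsum k)
  -- integrability of f_k log q and its value
  have hfklogq_meas : ∀ k, Measurable fun z : EuclideanSpace ℝ (Fin d) =>
      w k * p (z - y k) * Real.log (q z) :=
    fun k => (hfkr_meas k).mul (Real.measurable_log.comp hq_meas)
  have hdecomp_pos : ∀ k, ∀ z : EuclideanSpace ℝ (Fin d),
      ENNReal.ofReal (w k * p (z - y k) * Real.log (q z))
        = ENNReal.ofReal (w k * p (z - y k)) * ENNReal.ofReal (Real.log (q z)) :=
    fun k z => ENNReal.ofReal_mul (mul_nonneg (hw_nonneg k) (hp_nonneg _))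
  have hdecomp_neg : ∀ k, ∀ z : EuclideanSpace ℝ (Fin d),
      ENNReal.ofReal (-(w k * p (z - y k) * Real.log (q z)))
        = ENNReal.ofReal (w k * p (z - y k)) * ENNReal.ofReal (-Real.log (q z)) := by
    intro k z
    rw [← ENNReal.ofReal_mul (mul_nonneg (hw_nonneg k) (hp_nonneg _))]
    congr 1; ring
  have hint_fkq : ∀ k, Integrable fun z => w k * p (z - y k) * Real.log (q z) := by
    intro k
    refine ⟨(hfklogq_meas k).aestronglyMeasurable, ?_⟩
    have habs : ∫⁻ z, (‖w k * p (z - y k) * Real.log (q z)‖₊ : ℝ≥0∞)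
        = (∫⁻ z, ENNReal.ofReal (w k * p (z - y k)) * ENNReal.ofReal (Real.log (q z)))
          + ∫⁻ z, ENNReal.ofReal (w k * p (z - y k)) * ENNReal.ofReal (-Real.log (q z)) := by
      rw [← lintegral_add_left (he_meas k)]
      refine lintegral_congr fun z => ?_
      rw [← enorm_eq_nnnorm, Real.enorm_eq_ofReal_abs]
      rcases le_total 0 (w k * p (z - y k) * Real.log (q z)) with h | h
      · rw [abs_of_nonneg h, ← hdecomp_pos k z, ← hdecomp_neg k z,
          ENNReal.ofReal_of_nonpos (neg_nonpos.mpr h), add_zero]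
      · rw [abs_of_nonpos h, ← hdecomp_pos k z, ← hdecomp_neg k z,
          ENNReal.ofReal_of_nonpos h, zero_add]
    show ∫⁻ z, (‖w k * p (z - y k) * Real.log (q z)‖₊ : ℝ≥0∞) < ⊤
    rw [habs]
    exact ENNReal.add_lt_top.mpr ⟨(he_top k).lt_top, (hg_top k).lt_top⟩
  have hint_fkq_eq : ∀ k, ∫ z, w k * p (z - y k) * Real.log (q z)
      = (∫⁻ z, ENNReal.ofReal (w k * p (z - y k)) * ENNReal.ofReal (Real.log (q z))).toReal
        - (∫⁻ z, ENNReal.ofReal (w k * p (z - y k)) * ENNReal.ofReal (-Real.log (q z))).toReal := by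
    intro k
    rw [integral_eq_lintegral_pos_part_sub_lintegral_neg_part (hint_fkq k)]
    congr 2
    · exact lintegral_congr fun z => hdecomp_pos k z
    · exact lintegral_congr fun z => hdecomp_neg k z
  -- the entropy integral of each component
  have hplogfk_int : ∀ k, Integrable (fun z => w k * p (z - y k) * Real.log (w k * p (z - y k)))
      ∧ ∫ z, w k * p (z - y k) * Real.log (w k * p (z - y k))
        = w k * (∫ x, p x * Real.log (p x)) + w k * Real.log (w k) := by
    intro k
    rcases (hw_nonneg k).eq_or_lt with hw0 | hw_pos
    · constructor
      · have : (fun z : EuclideanSpace ℝ (Fin d) =>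
            w k * p (z - y k) * Real.log (w k * p (z - y k))) = fun _ => 0 := by
          funext z; rw [← hw0]; simp
        rw [this]; exact integrable_zero _ _ _
      · rw [← hw0]; simp
    · have heq : ∀ z : EuclideanSpace ℝ (Fin d),
          w k * p (z - y k) * Real.log (w k * p (z - y k))
            = w k * (p (z - y k) * Real.log (w k) + p (z - y k) * Real.log (p (z - y k))) := by
        intro z
        rcases (hp_nonneg (z - y k)).eq_or_lt with hp0 | hp_pos
        · rw [← hp0]; simp
        · rw [Real.log_mul hw_pos.ne' hp_pos.ne']; ring
      have hpk_int : Integrable fun z : EuclideanSpace ℝ (Fin d) => p (z - y k) :=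
        hp_int.comp_sub_right (y k)
      have hplogpk_int : Integrable fun z : EuclideanSpace ℝ (Fin d) =>
          p (z - y k) * Real.log (p (z - y k)) := hhX.comp_sub_right (y k)
      have hsum_int : Integrable fun z : EuclideanSpace ℝ (Fin d) =>
          p (z - y k) * Real.log (w k) + p (z - y k) * Real.log (p (z - y k)) :=
        (hpk_int.mul_const _).add hplogpk_int
      have h5 : (fun z : EuclideanSpace ℝ (Fin d) =>
          w k * p (z - y k) * Real.log (w k * p (z - y k)))
            = fun z => w k * (p (z - y k) * Real.log (w k)
              + p (z - y k) * Real.log (p (z - y k))) := funext heq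
      constructor
      · rw [h5]; exact hsum_int.const_mul _
      · rw [h5, integral_const_mul, integral_add (hpk_int.mul_const _) hplogpk_int,
          integral_mul_const, integral_sub_right_eq_self (fun x => p x) (y k),
          integral_sub_right_eq_self (fun x => p x * Real.log (p x)) (y k), hp_int1]
        ring
  -- per-k comparison
  have hperk : ∀ k, w k * (∫ x, p x * Real.log (p x)) + w k * Real.log (w k)
      ≤ (∫⁻ z, ENNReal.ofReal (w k * p (z - y k)) * ENNReal.ofReal (Real.log (q z))).toReal
        - (∫⁻ z, ENNReal.ofReal (w k * p (z - y k))
            * ENNReal.ofReal (-Real.log (q z))).toReal := by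
    intro k
    rw [← (hplogfk_int k).2, ← hint_fkq_eq k]
    refine integral_mono_ae (hplogfk_int k).1 (hint_fkq k) ?_
    filter_upwards [hfk_le_q] with z hz
    rcases (mul_nonneg (hw_nonneg k) (hp_nonneg (z - y k))).eq_or_lt with hf0 | hf_pos
    · rw [← hf0]; simp
    · exact mul_le_mul_of_nonneg_left (Real.log_le_log hf_pos (hz k)) hf_pos.le
  -- summation
  have he_summable : Summable fun k =>
      (∫⁻ z, ENNReal.ofReal (w k * p (z - y k)) * ENNReal.ofReal (Real.log (q z))).toReal :=
    ENNReal.summable_toReal (by rw [hesum]; exact hAp_top)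
  have hg_summable : Summable fun k =>
      (∫⁻ z, ENNReal.ofReal (w k * p (z - y k)) * ENNReal.ofReal (-Real.log (q z))).toReal :=
    ENNReal.summable_toReal (by rw [hgsum]; exact hAm_top)
  have hsum_e : ∑' k,
      (∫⁻ z, ENNReal.ofReal (w k * p (z - y k)) * ENNReal.ofReal (Real.log (q z))).toReal
        = (∫⁻ z, ENNReal.ofReal (q z * Real.log (q z))).toReal := by
    rw [← ENNReal.tsum_toReal_eq he_top, hesum]
  have hsum_g : ∑' k,
      (∫⁻ z, ENNReal.ofReal (w k * p (z - y k)) * ENNReal.ofReal (-Real.log (q z))).toReal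
        = (∫⁻ z, ENNReal.ofReal (-(q z * Real.log (q z)))).toReal := by
    rw [← ENNReal.tsum_toReal_eq hg_top, hgsum]
  have hLHS_sum : Summable fun k =>
      w k * (∫ x, p x * Real.log (p x)) + w k * Real.log (w k) :=
    (hw_summable.mul_right _).add hHY
  have hfinal := Summable.tsum_le_tsum hperk hLHS_sum (he_summable.sub hg_summable)
  rw [Summable.tsum_add (hw_summable.mul_right _) hHY, tsum_mul_right, hw_sum, one_mul,
    Summable.tsum_sub he_summable hg_summable, hsum_e, hsum_g] at hfinal
  rw [hint_eq]
  linarith
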